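/- Let p be a prime and m, n positive natural numbers with p^(n-1) < m < p^n. Let V = Fin m → ZMod p, let A ∈ GL_m(ZMod p) be the Jordan block with eigenvalue 1 (entries 1 on the diagonal and first superdiagonal, 0 elsewhere), and let G be the semidirect product of the additive group V by the cyclic subgroup generated by A inside GL_m(ZMod p), where A acts on V by matrix-vector multiplication. Then the exponent of the group G is exactly p^n. -/

import Mathlib

/-- The nilpotent upper-triangular Jordan block: entry `(i,j)` is `1` if `j = i + 1`
and `0` otherwise. -/
def jordanNilp (p m : ℕ) : Matrix (Fin m) (Fin m) (ZMod p) :=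
  Matrix.of fun i j => if (j : ℕ) = (i : ℕ) + 1 then 1 else 0

/-- The additive automorphism of `V = Fin m → ZMod p` given by right matrix-vector
multiplication (`vecMul`) by an invertible matrix `g`, i.e. `v ↦ v · g`. -/
def vecMulAut {p m : ℕ} (g : GL (Fin m) (ZMod p)) : AddAut (Fin m → ZMod p) where
  toFun v := Matrix.vecMul v (g : Matrix (Fin m) (Fin m) (ZMod p))
  invFun v := Matrix.vecMul v ((↑(g⁻¹) : Matrix (Fin m) (Fin m) (ZMod p)))
  left_inv v := by simp [Matrix.vecMul_vecMul]
  right_inv v := by simp [Matrix.vecMul_vecMul]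
  map_add' u v := Matrix.add_vecMul (g : Matrix (Fin m) (Fin m) (ZMod p)) u v

set_option maxHeartbeats 1000000 in
/-- The action of the cyclic subgroup `⟨A⟩ = Subgroup.zpowers A` on the (multiplicative
version of the) additive group `V = Fin m → ZMod p`, a matrix acting by right
matrix-vector multiplication `v ↦ v · A`. -/
def holPhi {p m : ℕ} (A : GL (Fin m) (ZMod p)) :
    ↥(Subgroup.zpowers A) →* MulAut (Multiplicative (Fin m → ZMod p)) where
  toFun g := AddEquiv.toMultiplicative (vecMulAut (g : GL (Fin m) (ZMod p)))
  map_one' := by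
    ext v
    simp [vecMulAut, AddEquiv.toMultiplicative]
  map_mul' g h := by
    rw [show g * h = h * g from Subtype.ext (by
      obtain ⟨k, hk⟩ := Subgroup.mem_zpowers_iff.mp g.2
      obtain ⟨l, hl⟩ := Subgroup.mem_zpowers_iff.mp h.2
      rw [Subgroup.coe_mul, Subgroup.coe_mul, ← hk, ← hl]
      exact Commute.zpow_zpow_self A k l)]
    ext v
    simp [vecMulAut, AddEquiv.toMultiplicative, Matrix.vecMul_vecMul]

lemma jordanNilp_pow (p m k : ℕ) :
    (jordanNilp p m) ^ k = Matrix.of (fun (i j : Fin m) => if (j : ℕ) = (i : ℕ) + k then (1 : ZMod p) else 0) := by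
  induction k with
  | zero =>
    ext i j
    simp [Matrix.one_apply, Fin.ext_iff, eq_comm]
  | succ k ih =>
    rw [pow_succ, ih]
    ext i j
    rw [Matrix.mul_apply]
    by_cases h : (i : ℕ) + k < m
    · rw [Finset.sum_eq_single (⟨(i : ℕ) + k, h⟩ : Fin m)]
      · simp [jordanNilp, add_assoc]
      · intro b _ hb
        have : (b : ℕ) ≠ (i : ℕ) + k := fun hc => hb (by ext; simp [hc])
        simp [jordanNilp, this]
      · intro hb; exact absurd (Finset.mem_univ _) hb
    · have h1 : ∀ b : Fin m, (Matrix.of fun (i j : Fin m) => if (j : ℕ) = (i : ℕ) + k then (1 : ZMod p) else 0) i b * jordanNilp p m b j = 0 := by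
        intro b
        have : (b : ℕ) ≠ (i : ℕ) + k := fun hc => h (hc ▸ b.isLt)
        simp [this]
      rw [Finset.sum_eq_zero fun b _ => h1 b]
      have : (j : ℕ) ≠ (i : ℕ) + (k + 1) := by
        have := j.isLt; omega
      simp [this]

lemma jordanNilp_pow_eq_zero (p m k : ℕ) (h : m ≤ k) : (jordanNilp p m) ^ k = 0 := by
  rw [jordanNilp_pow]
  ext i j
  have : (j : ℕ) ≠ (i : ℕ) + k := by have := j.isLt; omega
  simp [this]

open Polynomial in
lemma key_sum (p m n : ℕ) [Fact p.Prime] (hm : 0 < m) (hn : 0 < n) (h2 : m < p ^ n) (j : ℕ) :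
    ∑ i ∈ Finset.range (p ^ n), ((1 + jordanNilp p m) ^ j) ^ i = 0 := by
  haveI : NeZero m := ⟨hm.ne'⟩
  haveI : Nonempty (Fin m) := ⟨⟨0, hm⟩⟩
  rcases Nat.eq_zero_or_pos j with hj | hj
  · subst hj
    simp only [pow_zero, one_pow, Finset.sum_const, Finset.card_range, nsmul_eq_mul, mul_one]
    rw [Nat.cast_pow, show ((p : Matrix (Fin m) (Fin m) (ZMod p))) = 0 from CharP.cast_eq_zero _ p,
      zero_pow hn.ne']
  · set R := ZMod p
    set Y : R[X] := (1 + X) ^ j with hY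
    have hY1 : Y ≠ 1 := by
      intro hc
      have : (Y : R[X]).natDegree = j := by
        rw [hY, add_comm, ← Polynomial.C_1, natDegree_pow_X_add_C]
      rw [hc, Polynomial.natDegree_one] at this
      omega
    have hq1 : 1 ≤ p ^ n := Nat.one_le_pow _ _ (Fact.out : p.Prime).pos
    have hgeom : ∑ i ∈ Finset.range (p ^ n), Y ^ i = (Y - 1) ^ (p ^ n - 1) := by
      have e1 : (∑ i ∈ Finset.range (p ^ n), Y ^ i) * (Y - 1) = Y ^ p ^ n - 1 :=
        geom_sum_mul Y (p ^ n)
      have e2 : ((Y - 1) ^ (p ^ n - 1)) * (Y - 1) = Y ^ p ^ n - 1 := by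
        rw [← pow_succ, Nat.sub_add_cancel hq1, sub_pow_char_pow, one_pow]
      exact mul_right_cancel₀ (sub_ne_zero.mpr hY1) (e1.trans e2.symm)
    have hXdvd : (X : R[X]) ∣ Y - 1 := by
      rw [Polynomial.X_dvd_iff, Polynomial.coeff_zero_eq_eval_zero]
      simp [hY]
    have hdvd : (X : R[X]) ^ m ∣ (Y - 1) ^ (p ^ n - 1) :=
      dvd_trans (pow_dvd_pow _ (by omega)) (pow_dvd_pow_of_dvd hXdvd _)
    obtain ⟨r, hr⟩ := hdvd
    have := congrArg (Polynomial.aeval (jordanNilp p m)) (hgeom.trans hr)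
    rw [map_sum] at this
    simp only [map_pow, map_mul, map_add, Polynomial.aeval_X, Polynomial.aeval_one, hY] at this
    rw [this, jordanNilp_pow_eq_zero p m m le_rfl, zero_mul]

lemma sdp_pow_left {N G : Type*} [CommGroup N] [Group G] (φ : G →* MulAut N)
    (g : N ⋊[φ] G) (t : ℕ) :
    (g ^ t).left = ∏ i ∈ Finset.range t, φ (g.right ^ i) g.left := by
  induction t with
  | zero => simp [SemidirectProduct.one_left]
  | succ t ih =>
    have hr : (g ^ t).right = g.right ^ t := by
      simpa using map_pow (SemidirectProduct.rightHom (φ := φ)) g t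
    rw [pow_succ, SemidirectProduct.mul_left, ih, hr, Finset.prod_range_succ]

lemma sdp_pow_right {N G : Type*} [Group N] [Group G] (φ : G →* MulAut N)
    (g : N ⋊[φ] G) (t : ℕ) : (g ^ t).right = g.right ^ t := by
  simpa using map_pow (SemidirectProduct.rightHom (φ := φ)) g t

theorem exponent_holomorph_jordan_block (p m n : ℕ) [Fact p.Prime]
    (hm : 0 < m) (hn : 0 < n) (h1 : p ^ (n - 1) < m) (h2 : m < p ^ n)
    (A : GL (Fin m) (ZMod p))
    (hA : (A : Matrix (Fin m) (Fin m) (ZMod p)) = 1 + jordanNilp p m) :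
    Monoid.exponent (Multiplicative (Fin m → ZMod p) ⋊[holPhi A] ↥(Subgroup.zpowers A))
      = p ^ n := by
  haveI : NeZero m := ⟨hm.ne'⟩
  haveI : Nonempty (Fin m) := ⟨⟨0, hm⟩⟩
  have hp' : p.Prime := Fact.out
  -- powers of A
  have hApow : ∀ e : ℕ, ((A : Matrix (Fin m) (Fin m) (ZMod p))) ^ (p ^ e)
      = 1 + (jordanNilp p m) ^ (p ^ e) := by
    intro e
    rw [hA, add_pow_char_pow_of_commute _ _ (Commute.one_left _), one_pow]
  have hAq : A ^ (p ^ n) = 1 := by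
    apply Units.ext
    rw [Units.val_pow_eq_pow_val, hApow n, jordanNilp_pow_eq_zero p m _ (le_of_lt h2),
      add_zero, Units.val_one]
  have hAq' : ¬ A ^ (p ^ (n - 1)) = 1 := by
    intro hc
    have hc' := congrArg Units.val hc
    rw [Units.val_pow_eq_pow_val, hApow (n - 1), Units.val_one] at hc'
    have h0 := congrFun (congrFun hc' ⟨0, hm⟩) ⟨p ^ (n - 1), h1⟩
    have hne : (⟨0, hm⟩ : Fin m) ≠ ⟨p ^ (n - 1), h1⟩ := by
      simp only [ne_eq, Fin.mk.injEq]
      exact fun hc0 => (pow_pos hp'.pos (n - 1)).ne hc0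
    rw [jordanNilp_pow, Matrix.add_apply, Matrix.one_apply_ne hne, Matrix.of_apply,
      if_pos (by simp)] at h0
    simpa using h0
  have hordA : orderOf A = p ^ n := by
    have h := orderOf_eq_prime_pow (x := A) (n := n - 1) hAq'
      (by rw [Nat.sub_add_cancel hn]; exact hAq)
    rwa [Nat.sub_add_cancel hn] at h
  -- every element of zpowers A is a natural power
  have hzq : ∀ a : ↥(Subgroup.zpowers A), ∃ k : ℕ,
      (a : GL (Fin m) (ZMod p)) = A ^ k := by
    intro a
    obtain ⟨k, hk⟩ := Subgroup.mem_zpowers_iff.mp a.2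
    refine ⟨(k % ((p ^ n : ℕ) : ℤ)).toNat, ?_⟩
    have hmod := zpow_mod_orderOf A k
    rw [hordA] at hmod
    rw [← hk, ← hmod, ← zpow_natCast,
      Int.toNat_of_nonneg (Int.emod_nonneg k (by exact_mod_cast (pow_pos hp'.pos n).ne'))]
  -- inline vecMul-sum lemma
  have vecMul_sum : ∀ (s : Finset ℕ) (f : ℕ → Matrix (Fin m) (Fin m) (ZMod p))
      (v : Fin m → ZMod p),
      Matrix.vecMul v (∑ i ∈ s, f i) = ∑ i ∈ s, Matrix.vecMul v (f i) := by
    intro s f v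
    classical
    induction s using Finset.induction with
    | empty => simp
    | insert _ _ h ih => rw [Finset.sum_insert h, Finset.sum_insert h, Matrix.vecMul_add, ih]
  -- upper bound
  have hupper : Monoid.exponent
      (Multiplicative (Fin m → ZMod p) ⋊[holPhi A] ↥(Subgroup.zpowers A)) ∣ p ^ n := by
    apply Monoid.exponent_dvd_of_forall_pow_eq_one
    intro g
    obtain ⟨k, hk⟩ := hzq g.right
    set v := Multiplicative.toAdd g.left with hv
    set M := ((g.right : GL (Fin m) (ZMod p)) : Matrix (Fin m) (Fin m) (ZMod p)) with hMdef
    have hM : M = (1 + jordanNilp p m) ^ k := by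
      rw [hMdef, hk, Units.val_pow_eq_pow_val, hA]
    apply SemidirectProduct.ext
    · rw [sdp_pow_left, SemidirectProduct.one_left]
      have hcoe : ∀ i : ℕ, (((g.right ^ i : ↥(Subgroup.zpowers A)) : GL (Fin m) (ZMod p))
          : Matrix (Fin m) (Fin m) (ZMod p)) = M ^ i := by
        intro i
        rw [SubmonoidClass.coe_pow, Units.val_pow_eq_pow_val]
      have hterm : ∀ i : ℕ, (holPhi A) (g.right ^ i) g.left
          = Multiplicative.ofAdd (Matrix.vecMul v (M ^ i)) := by
        intro i
        rw [show (holPhi A) (g.right ^ i) g.left = Multiplicative.ofAdd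
          (Matrix.vecMul v (((g.right ^ i : ↥(Subgroup.zpowers A)) : GL (Fin m) (ZMod p))
            : Matrix (Fin m) (Fin m) (ZMod p))) from rfl, hcoe i]
      rw [Finset.prod_congr rfl (fun i _ => hterm i), ← ofAdd_sum, ← vecMul_sum]
      rw [show ∑ i ∈ Finset.range (p ^ n), M ^ i = 0 by
        rw [hM]; exact key_sum p m n hm hn h2 k]
      rw [Matrix.vecMul_zero, ofAdd_zero]
    · rw [sdp_pow_right, SemidirectProduct.one_right]
      have : (((g.right ^ (p ^ n) : ↥(Subgroup.zpowers A))) : GL (Fin m) (ZMod p)) = 1 := by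
        rw [SubmonoidClass.coe_pow, hk, ← pow_mul, mul_comm, pow_mul, hAq, one_pow]
      exact (OneMemClass.coe_eq_one).mp this
  -- lower bound
  have hlow : p ^ n ∣ Monoid.exponent
      (Multiplicative (Fin m → ZMod p) ⋊[holPhi A] ↥(Subgroup.zpowers A)) := by
    set a0 : ↥(Subgroup.zpowers A) := ⟨A, Subgroup.mem_zpowers A⟩ with ha0
    have h1' : orderOf a0 = p ^ n := by
      rw [← hordA]
      exact (orderOf_injective (Subgroup.zpowers A).subtype Subtype.coe_injective a0).symm
    have h2' : orderOf (SemidirectProduct.inr (φ := holPhi A) a0) = p ^ n := by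
      rw [orderOf_injective SemidirectProduct.inr SemidirectProduct.inr_injective a0, h1']
    exact h2' ▸ Monoid.order_dvd_exponent _
  exact Nat.dvd_antisymm hupper hlow
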